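/- If t is a positive integer with t ≡ 4 or 10 (mod 12), then c₃(t) = (t³ − 16t² + 76t − 112)/6. -/

import Mathlib

/-- A 3×3 magic square with entries bounded above (strictly) by `t`: pairwise distinct
positive integer entries less than `t`, with all row sums, column sums, and both main
diagonal sums equal to one another. -/
def IsBoundedMagicSquare3 (t : ℕ) (M : Matrix (Fin 3) (Fin 3) ℕ) : Prop :=
  (∀ i j, 0 < M i j ∧ M i j < t) ∧
  (Function.Injective fun p : Fin 3 × Fin 3 => M p.1 p.2) ∧
  ∃ s, (∀ i, ∑ j, M i j = s) ∧ (∀ j, ∑ i, M i j = s) ∧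
    M 0 0 + M 1 1 + M 2 2 = s ∧ M 0 2 + M 1 1 + M 2 0 = s

/-- The number of 3×3 magic squares all of whose entries are less than `t`. -/
noncomputable def c3 (t : ℕ) : ℕ :=
  Set.ncard {M : Matrix (Fin 3) (Fin 3) ℕ | IsBoundedMagicSquare3 t M}

section MagicAux
open Finset

def DD (a b : ℤ) : Prop :=
  a ≠ 0 ∧ b ≠ 0 ∧ a ≠ b ∧ a ≠ -b ∧ b ≠ 2*a ∧ b ≠ -(2*a) ∧ a ≠ 2*b ∧ a ≠ -(2*b)

instance (a b : ℤ) : Decidable (DD a b) := by unfold DD; infer_instance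

/-- pairs (a,b), distinctness, |a|+|b| ≤ k (expressed linearly) -/
noncomputable def pairs (k : ℤ) : Finset (ℤ × ℤ) :=
  ((Finset.Icc (-k) k) ×ˢ (Finset.Icc (-k) k)).filter fun p =>
    DD p.1 p.2 ∧ p.1 + p.2 ≤ k ∧ -(p.1 + p.2) ≤ k ∧ p.1 - p.2 ≤ k ∧ p.2 - p.1 ≤ k

noncomputable def params (t : ℤ) : Finset (ℤ × ℤ × ℤ) :=
  ((Finset.Icc 1 t) ×ˢ ((Finset.Icc (-t) t) ×ˢ (Finset.Icc (-t) t))).filter fun x =>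
    DD x.2.1 x.2.2 ∧
    (x.2.1 + x.2.2 < x.1 ∧ -(x.2.1 + x.2.2) < x.1 ∧ x.2.1 - x.2.2 < x.1 ∧ x.2.2 - x.2.1 < x.1) ∧
    (x.1 + x.2.1 + x.2.2 < t ∧ x.1 - x.2.1 - x.2.2 < t ∧ x.1 + x.2.1 - x.2.2 < t ∧ x.1 - x.2.1 + x.2.2 < t)


noncomputable def ball (k : ℤ) : Finset (ℤ × ℤ) :=
  ((Finset.Icc (-k) k) ×ˢ (Finset.Icc (-k) k)).filter fun p =>
    p.1 ≠ 0 ∧ p.2 ≠ 0 ∧ p.1 + p.2 ≤ k ∧ -(p.1 + p.2) ≤ k ∧ p.1 - p.2 ≤ k ∧ p.2 - p.1 ≤ k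

noncomputable def shellAt (k : ℤ) : Finset (ℤ × ℤ) :=
  (ball k).filter fun p =>
    ¬(p.1 + p.2 ≤ k-1 ∧ -(p.1 + p.2) ≤ k-1 ∧ p.1 - p.2 ≤ k-1 ∧ p.2 - p.1 ≤ k-1)

lemma ball_zero : (ball 0).card = 0 := by
  rw [Finset.card_eq_zero, Finset.eq_empty_iff_forall_notMem]
  rintro ⟨x, y⟩ h
  simp [ball, Finset.mem_filter, Finset.mem_product, Finset.mem_Icc] at h
  omega

lemma ball_succ (n : ℕ) :
    (ball ((n:ℤ)+1)).card = (ball (n:ℤ)).card + (shellAt ((n:ℤ)+1)).card := by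
  have h := Finset.card_filter_add_card_filter_not (s := ball ((n:ℤ)+1))
    (p := fun p => p.1 + p.2 ≤ (n:ℤ) ∧ -(p.1 + p.2) ≤ (n:ℤ) ∧ p.1 - p.2 ≤ (n:ℤ) ∧ p.2 - p.1 ≤ (n:ℤ))
  have h1 : (ball ((n:ℤ)+1)).filter
      (fun p => p.1 + p.2 ≤ (n:ℤ) ∧ -(p.1 + p.2) ≤ (n:ℤ) ∧ p.1 - p.2 ≤ (n:ℤ) ∧ p.2 - p.1 ≤ (n:ℤ))
      = ball (n:ℤ) := by
    ext ⟨x, y⟩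
    simp only [ball, Finset.mem_filter, Finset.mem_product, Finset.mem_Icc]
    constructor
    · intro hh; exact ⟨⟨by omega, by omega⟩, by omega, by omega, by omega, by omega, by omega, by omega⟩
    · intro hh; exact ⟨⟨⟨by omega, by omega⟩, by omega, by omega, by omega, by omega, by omega, by omega⟩, by omega, by omega, by omega, by omega⟩
  have h2 : (ball ((n:ℤ)+1)).filter
      (fun p => ¬(p.1 + p.2 ≤ (n:ℤ) ∧ -(p.1 + p.2) ≤ (n:ℤ) ∧ p.1 - p.2 ≤ (n:ℤ) ∧ p.2 - p.1 ≤ (n:ℤ)))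
      = shellAt ((n:ℤ)+1) := by
    unfold shellAt
    norm_num
  rw [h1, h2] at h
  omega

lemma shell_card (k : ℤ) (hk : 1 ≤ k) : (shellAt k).card = (4*(k-1)).toNat := by
  have e : shellAt k =
      (((Finset.Icc 1 (k-1)).image fun a => (a, k-a)) ∪ ((Finset.Icc 1 (k-1)).image fun a => (a, a-k)))
      ∪ (((Finset.Icc 1 (k-1)).image fun a => (-a, k-a)) ∪ ((Finset.Icc 1 (k-1)).image fun a => (-a, a-k))) := by
    ext ⟨x, y⟩
    simp only [shellAt, ball, Finset.mem_filter, Finset.mem_product, Finset.mem_Icc,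
      Finset.mem_union, Finset.mem_image, Prod.mk.injEq]
    constructor
    · rintro ⟨⟨⟨hx, hy⟩, hx0, hy0, h1, h2, h3, h4⟩, h5⟩
      rcases lt_or_gt_of_ne hx0 with hxneg | hxpos
      · rcases lt_or_gt_of_ne hy0 with hyneg | hypos
        · exact Or.inr (Or.inr ⟨-x, by omega, by omega, by omega⟩)
        · exact Or.inr (Or.inl ⟨-x, by omega, by omega, by omega⟩)
      · rcases lt_or_gt_of_ne hy0 with hyneg | hypos
        · exact Or.inl (Or.inr ⟨x, by omega, by omega, by omega⟩)
        · exact Or.inl (Or.inl ⟨x, by omega, by omega, by omega⟩)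
    · rintro ((⟨a, ha, rfl, rfl⟩ | ⟨a, ha, rfl, rfl⟩) | (⟨a, ha, rfl, rfl⟩ | ⟨a, ha, rfl, rfl⟩)) <;>
        refine ⟨⟨⟨by omega, by omega⟩, by omega, by omega, by omega, by omega, by omega, by omega⟩, by omega⟩
  have hinj1 : Function.Injective (fun a : ℤ => (a, k-a)) := by
    intro a b hab; have := (Prod.ext_iff.mp hab).1; simpa using this
  have hinj2 : Function.Injective (fun a : ℤ => (a, a-k)) := by
    intro a b hab; have := (Prod.ext_iff.mp hab).1; simpa using this
  have hinj3 : Function.Injective (fun a : ℤ => (-a, k-a)) := by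
    intro a b hab; have := (Prod.ext_iff.mp hab).1; simpa using this
  have hinj4 : Function.Injective (fun a : ℤ => (-a, a-k)) := by
    intro a b hab; have := (Prod.ext_iff.mp hab).1; simpa using this
  have d12 : Disjoint ((Finset.Icc 1 (k-1)).image fun a => (a, k-a)) ((Finset.Icc 1 (k-1)).image fun a => (a, a-k)) := by
    rw [Finset.disjoint_left]
    rintro ⟨x, y⟩ h1 h2
    simp only [Finset.mem_image, Finset.mem_Icc, Prod.mk.injEq] at h1 h2
    obtain ⟨a, ha, rfl, rfl⟩ := h1
    obtain ⟨b, hb, rfl, h⟩ := h2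
    omega
  have d34 : Disjoint ((Finset.Icc 1 (k-1)).image fun a => (-a, k-a)) ((Finset.Icc 1 (k-1)).image fun a => (-a, a-k)) := by
    rw [Finset.disjoint_left]
    rintro ⟨x, y⟩ h1 h2
    simp only [Finset.mem_image, Finset.mem_Icc, Prod.mk.injEq] at h1 h2
    obtain ⟨a, ha, rfl, rfl⟩ := h1
    obtain ⟨b, hb, hb2, h⟩ := h2
    omega
  have dL : Disjoint
      (((Finset.Icc 1 (k-1)).image fun a => (a, k-a)) ∪ ((Finset.Icc 1 (k-1)).image fun a => (a, a-k)))
      (((Finset.Icc 1 (k-1)).image fun a => (-a, k-a)) ∪ ((Finset.Icc 1 (k-1)).image fun a => (-a, a-k))) := by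
    rw [Finset.disjoint_left]
    rintro ⟨x, y⟩ h1 h2
    simp only [Finset.mem_union, Finset.mem_image, Finset.mem_Icc, Prod.mk.injEq] at h1 h2
    rcases h1 with ⟨a, ha, rfl, rfl⟩ | ⟨a, ha, rfl, rfl⟩ <;>
      rcases h2 with ⟨b, hb, hb2, h⟩ | ⟨b, hb, hb2, h⟩ <;> omega
  rw [e, Finset.card_union_of_disjoint dL, Finset.card_union_of_disjoint d12,
    Finset.card_union_of_disjoint d34, Finset.card_image_of_injective _ hinj1,
    Finset.card_image_of_injective _ hinj2, Finset.card_image_of_injective _ hinj3,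
    Finset.card_image_of_injective _ hinj4, Int.card_Icc]
  omega

lemma ball_card : ∀ n : ℕ, (ball (n:ℤ)).card + 2*n = 2*n^2 := by
  intro n
  induction n with
  | zero => simpa using ball_zero
  | succ n ih =>
    have h1 : ((n:ℤ)+1 : ℤ) = ((n+1 : ℕ) : ℤ) := by push_cast; ring
    have h2 := ball_succ n
    rw [h1] at h2
    have h3 := shell_card ((n:ℤ)+1) (by omega)
    rw [h1] at h3
    rw [h2, h3]
    have : ((4:ℤ) * (((n+1:ℕ):ℤ) - 1)).toNat = 4*n := by push_cast; omega
    rw [this]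
    nlinarith [ih]

lemma seg_card (m : ℕ) (f : ℤ → ℤ × ℤ) (hf : Function.Injective f) :
    (((Finset.Icc (-(m:ℤ)) m).erase 0).image f).card = 2*m := by
  rw [Finset.card_image_of_injective _ hf, Finset.card_erase_of_mem (by simp),
    Int.card_Icc]
  omega

lemma pairs_card (n : ℕ) :
    (pairs (n:ℤ)).card + 2*n + 4*(n/2) + 8*(n/3) = 2*n^2 := by
  classical
  set G : ℤ × ℤ → Prop := fun p =>
    p.1 ≠ p.2 ∧ p.1 ≠ -p.2 ∧ p.2 ≠ 2*p.1 ∧ p.2 ≠ -(2*p.1) ∧ p.1 ≠ 2*p.2 ∧ p.1 ≠ -(2*p.2)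
    with hG
  have hsplit := Finset.card_filter_add_card_filter_not (s := ball (n:ℤ)) (p := G)
  have hgood : (ball (n:ℤ)).filter G = pairs (n:ℤ) := by
    ext ⟨x, y⟩
    simp only [ball, pairs, Finset.mem_filter]
    simp only [DD, hG, Finset.mem_filter, Finset.mem_product, Finset.mem_Icc]
    constructor
    · intro hh
      refine ⟨⟨⟨by omega, by omega⟩, by omega, by omega⟩, ⟨?_,?_,?_,?_,?_,?_,?_,?_⟩, by omega, by omega, by omega, by omega⟩ <;> omega
    · intro hh
      refine ⟨⟨⟨⟨by omega, by omega⟩, by omega, by omega⟩, ?_,?_,?_,?_,?_,?_⟩, ?_,?_,?_,?_,?_,?_⟩ <;> omega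
  -- lines
  set B1 := ((Finset.Icc (-((n/2 : ℕ):ℤ)) ((n/2 : ℕ):ℤ)).erase 0).image (fun a : ℤ => (a, a)) with hB1
  set B2 := ((Finset.Icc (-((n/2 : ℕ):ℤ)) ((n/2 : ℕ):ℤ)).erase 0).image (fun a : ℤ => (a, -a)) with hB2
  set B3 := ((Finset.Icc (-((n/3 : ℕ):ℤ)) ((n/3 : ℕ):ℤ)).erase 0).image (fun a : ℤ => (a, 2*a)) with hB3
  set B4 := ((Finset.Icc (-((n/3 : ℕ):ℤ)) ((n/3 : ℕ):ℤ)).erase 0).image (fun a : ℤ => (a, -(2*a))) with hB4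
  set B5 := ((Finset.Icc (-((n/3 : ℕ):ℤ)) ((n/3 : ℕ):ℤ)).erase 0).image (fun a : ℤ => (2*a, a)) with hB5
  set B6 := ((Finset.Icc (-((n/3 : ℕ):ℤ)) ((n/3 : ℕ):ℤ)).erase 0).image (fun a : ℤ => (-(2*a), a)) with hB6
  have hbad : (ball (n:ℤ)).filter (fun p => ¬ G p) = ((B1 ∪ B2) ∪ (B3 ∪ B4)) ∪ (B5 ∪ B6) := by
    ext ⟨x, y⟩
    simp only [ball, hG, hB1, hB2, hB3, hB4, hB5, hB6, Finset.mem_filter, Finset.mem_product,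
      Finset.mem_Icc, Finset.mem_union, Finset.mem_image, Finset.mem_erase, Prod.mk.injEq]
    constructor
    · rintro ⟨⟨⟨hx1, hx2⟩, hx0, hy0, h1, h2, h3, h4⟩, hbad⟩
      by_cases c1 : x = y
      · exact Or.inl (Or.inl (Or.inl ⟨x, ⟨by omega, by omega, by omega⟩, by omega, by omega⟩))
      by_cases c2 : x = -y
      · exact Or.inl (Or.inl (Or.inr ⟨x, ⟨by omega, by omega, by omega⟩, by omega, by omega⟩))
      by_cases c3 : y = 2*x
      · exact Or.inl (Or.inr (Or.inl ⟨x, ⟨by omega, by omega, by omega⟩, by omega, by omega⟩))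
      by_cases c4 : y = -(2*x)
      · exact Or.inl (Or.inr (Or.inr ⟨x, ⟨by omega, by omega, by omega⟩, by omega, by omega⟩))
      by_cases c5 : x = 2*y
      · exact Or.inr (Or.inl ⟨y, ⟨by omega, by omega, by omega⟩, by omega, by omega⟩)
      by_cases c6 : x = -(2*y)
      · exact Or.inr (Or.inr ⟨y, ⟨by omega, by omega, by omega⟩, by omega, by omega⟩)
      · exact absurd ⟨c1, c2, c3, c4, c5, c6⟩ hbad
    · rintro ((( ⟨a, ⟨ha0, ha1, ha2⟩, rfl, rfl⟩ | ⟨a, ⟨ha0, ha1, ha2⟩, rfl, rfl⟩) |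
        (⟨a, ⟨ha0, ha1, ha2⟩, rfl, rfl⟩ | ⟨a, ⟨ha0, ha1, ha2⟩, rfl, rfl⟩)) |
        (⟨a, ⟨ha0, ha1, ha2⟩, rfl, rfl⟩ | ⟨a, ⟨ha0, ha1, ha2⟩, rfl, rfl⟩)) <;>
      refine ⟨⟨⟨by omega, by omega⟩, by omega, by omega, by omega, by omega, by omega, by omega⟩, ?_⟩ <;>
      · intro hh; omega
  have disj : ∀ (f g : ℤ → ℤ × ℤ) (m1 m2 : ℕ),
      (∀ a b : ℤ, a ≠ 0 → b ≠ 0 → f a ≠ g b) →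
      Disjoint (((Finset.Icc (-(m1:ℕ):ℤ) (m1:ℕ)).erase 0).image f)
        (((Finset.Icc (-(m2:ℕ):ℤ) (m2:ℕ)).erase 0).image g) := by
    intro f g m1 m2 hfg
    rw [Finset.disjoint_left]
    rintro p h1 h2
    simp only [Finset.mem_image, Finset.mem_erase, Finset.mem_Icc] at h1 h2
    obtain ⟨a, ⟨ha, _⟩, rfl⟩ := h1
    obtain ⟨b, ⟨hb, _⟩, hba⟩ := h2
    exact hfg a b ha hb hba.symm
  have pne : ∀ (x1 y1 x2 y2 : ℤ), (x1 ≠ x2 ∨ y1 ≠ y2) → (x1, y1) ≠ (x2, y2) := by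
    intro x1 y1 x2 y2 h hc
    rw [Prod.mk.injEq] at hc
    omega
  have d12 : Disjoint B1 B2 := disj _ _ _ _ (fun a b ha hb => pne _ _ _ _ (by omega))
  have d34 : Disjoint B3 B4 := disj _ _ _ _ (fun a b ha hb => pne _ _ _ _ (by omega))
  have d56 : Disjoint B5 B6 := disj _ _ _ _ (fun a b ha hb => pne _ _ _ _ (by omega))
  have d1234 : Disjoint (B1 ∪ B2) (B3 ∪ B4) := by
    simp only [Finset.disjoint_union_left, Finset.disjoint_union_right]
    exact ⟨⟨disj _ _ _ _ (fun a b ha hb => pne _ _ _ _ (by omega)),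
            disj _ _ _ _ (fun a b ha hb => pne _ _ _ _ (by omega))⟩,
           ⟨disj _ _ _ _ (fun a b ha hb => pne _ _ _ _ (by omega)),
            disj _ _ _ _ (fun a b ha hb => pne _ _ _ _ (by omega))⟩⟩
  have dbig : Disjoint ((B1 ∪ B2) ∪ (B3 ∪ B4)) (B5 ∪ B6) := by
    simp only [Finset.disjoint_union_left, Finset.disjoint_union_right]
    refine ⟨⟨⟨?_,?_⟩,?_,?_⟩,⟨?_,?_⟩,?_,?_⟩ <;>
      exact disj _ _ _ _ (fun a b ha hb => pne _ _ _ _ (by omega))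
  have hinj2 : ∀ (u v : ℤ), (u ≠ 0 ∨ v ≠ 0) → Function.Injective (fun a : ℤ => (u*a, v*a)) := by
    intro u v huv a b hab
    rw [Prod.mk.injEq] at hab
    rcases huv with h | h
    · exact mul_left_cancel₀ h hab.1
    · exact mul_left_cancel₀ h hab.2
  have c1 : B1.card = 2*(n/2) := seg_card _ _ (by
    intro a b hab; rw [Prod.mk.injEq] at hab; exact hab.1)
  have c2 : B2.card = 2*(n/2) := seg_card _ _ (by
    intro a b hab; rw [Prod.mk.injEq] at hab; exact hab.1)
  have c3 : B3.card = 2*(n/3) := seg_card _ _ (by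
    intro a b hab; rw [Prod.mk.injEq] at hab; exact hab.1)
  have c4 : B4.card = 2*(n/3) := seg_card _ _ (by
    intro a b hab; rw [Prod.mk.injEq] at hab; exact hab.1)
  have c5 : B5.card = 2*(n/3) := seg_card _ _ (by
    intro a b hab; rw [Prod.mk.injEq] at hab; exact hab.2)
  have c6 : B6.card = 2*(n/3) := seg_card _ _ (by
    intro a b hab; rw [Prod.mk.injEq] at hab; exact hab.2)
  have hball := ball_card n
  rw [hgood, hbad] at hsplit
  rw [Finset.card_union_of_disjoint dbig, Finset.card_union_of_disjoint d1234,
    Finset.card_union_of_disjoint d12, Finset.card_union_of_disjoint d34,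
    Finset.card_union_of_disjoint d56, c1, c2, c3, c4, c5, c6] at hsplit
  omega

lemma pairs_neg (k : ℤ) (hk : k < 0) : (pairs k).card = 0 := by
  rw [Finset.card_eq_zero, Finset.eq_empty_iff_forall_notMem]
  rintro ⟨x, y⟩ h
  simp only [pairs, Finset.mem_filter, Finset.mem_product, Finset.mem_Icc] at h
  omega

lemma params_card_sum (t : ℕ) :
    (params (t:ℤ)).card = ∑ j ∈ Finset.range t, (pairs (min (j:ℤ) ((t:ℤ)-2-(j:ℤ)))).card := by
  rw [Finset.card_eq_sum_card_fiberwise (f := fun x => (x.1 - 1).toNat) (t := Finset.range t)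
    (fun x hx => by
      simp only [params, Finset.mem_coe, Finset.mem_filter, Finset.mem_product, Finset.mem_Icc] at hx
      simp only [DD] at hx
      simp only [Finset.mem_coe, Finset.mem_range]
      omega)]
  refine Finset.sum_congr rfl fun j hj => ?_
  have hjt : j < t := Finset.mem_range.mp hj
  apply Finset.card_nbij' (i := fun x => x.2) (j := fun p => ((j:ℤ)+1, p))
  · intro x hx
    simp only [params, Finset.mem_coe, Finset.mem_filter, Finset.mem_product, Finset.mem_Icc] at hx
    simp only [DD] at hx
    simp only [pairs, Finset.mem_coe, Finset.mem_filter, Finset.mem_product, Finset.mem_Icc]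
    simp only [DD]
    rcases le_total ((j:ℤ)) ((t:ℤ)-2-(j:ℤ)) with hm | hm
    · rw [min_eq_left hm]; omega
    · rw [min_eq_right hm]; omega
  · intro p hp
    simp only [pairs, Finset.mem_coe, Finset.mem_filter, Finset.mem_product, Finset.mem_Icc] at hp
    simp only [DD] at hp
    simp only [params, Finset.mem_coe, Finset.mem_filter, Finset.mem_product, Finset.mem_Icc]
    simp only [DD]
    rcases le_total ((j:ℤ)) ((t:ℤ)-2-(j:ℤ)) with hm | hm
    · rw [min_eq_left hm] at hp; omega
    · rw [min_eq_right hm] at hp; omega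
  · intro x hx
    simp only [Finset.mem_coe, params, Finset.mem_filter] at hx
    have : (x.1 - 1).toNat = j := hx.2
    have h1 : 1 ≤ x.1 := by
      have h2 := hx.1
      simp only [Finset.mem_product, Finset.mem_Icc] at h2
      omega
    have : x.1 = (j:ℤ)+1 := by omega
    exact Prod.ext (by simp [this]) rfl
  · intro p hp
    rfl

lemma sum_id (n : ℕ) : 2 * (∑ j ∈ Finset.range n, j) + n = n*n := by
  induction n with
  | zero => simp
  | succ n ih => rw [Finset.sum_range_succ]; nlinarith [ih]

lemma sum_sq (n : ℕ) : 6 * (∑ j ∈ Finset.range n, j^2) + 3*(n*n) = 2*(n*n*n) + n := by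
  induction n with
  | zero => simp
  | succ n ih => rw [Finset.sum_range_succ]; nlinarith [ih]

lemma sum_d2 (n : ℕ) : (∑ j ∈ Finset.range n, j/2) + n/2 = (n/2)*(n/2) + (n%2)*(n/2) := by
  induction n with
  | zero => simp
  | succ n ih =>
    rw [Finset.sum_range_succ]
    have h2 : n % 2 = 0 ∨ n % 2 = 1 := by omega
    rcases h2 with h2 | h2
    · have e1 : (n+1)/2 = n/2 := by omega
      have e2 : (n+1)%2 = 1 := by omega
      rw [h2] at ih
      rw [e1, e2]
      linarith [ih]
    · have e1 : (n+1)/2 = n/2 + 1 := by omega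
      have e2 : (n+1)%2 = 0 := by omega
      rw [h2] at ih
      rw [e1, e2]
      nlinarith [ih]

lemma sum_d3 (n : ℕ) :
    2*(∑ j ∈ Finset.range n, j/3) + 3*(n/3) = 3*((n/3)*(n/3)) + 2*((n%3)*(n/3)) := by
  induction n with
  | zero => simp
  | succ n ih =>
    rw [Finset.sum_range_succ]
    have h3 : n % 3 = 0 ∨ n % 3 = 1 ∨ n % 3 = 2 := by omega
    rcases h3 with h3 | h3 | h3
    · have e1 : (n+1)/3 = n/3 := by omega
      have e2 : (n+1)%3 = 1 := by omega
      rw [h3] at ih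
      rw [e1, e2]
      linarith [ih]
    · have e1 : (n+1)/3 = n/3 := by omega
      have e2 : (n+1)%3 = 2 := by omega
      rw [h3] at ih
      rw [e1, e2]
      linarith [ih]
    · have e1 : (n+1)/3 = n/3 + 1 := by omega
      have e2 : (n+1)%3 = 0 := by omega
      rw [h3] at ih
      rw [e1, e2]
      nlinarith [ih]

lemma SG_rel (n : ℕ) :
    (∑ j ∈ Finset.range n, (pairs (j:ℤ)).card) + 2*(∑ j ∈ Finset.range n, j)
      + 4*(∑ j ∈ Finset.range n, j/2) + 8*(∑ j ∈ Finset.range n, j/3)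
      = 2*(∑ j ∈ Finset.range n, j^2) := by
  have h : ∀ j ∈ Finset.range n, (pairs (j:ℤ)).card + 2*j + 4*(j/2) + 8*(j/3) = 2*j^2 :=
    fun j _ => pairs_card j
  have h2 := Finset.sum_congr rfl h
  simp only [Finset.sum_add_distrib] at h2
  simp only [Finset.mul_sum]
  convert h2 using 2

lemma params_total (m : ℕ) (hm : 2 ≤ m) :
    (params ((2*m : ℕ):ℤ)).card
      = (∑ j ∈ Finset.range m, (pairs (j:ℤ)).card)
        + (∑ j ∈ Finset.range (m-1), (pairs (j:ℤ)).card) := by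
  rw [params_card_sum (2*m)]
  have h2m : 2*m = (2*m - 1) + 1 := by omega
  rw [h2m, Finset.sum_range_succ]
  simp only [h2m.symm]
  have hlast : (pairs (min ((2*m-1 : ℕ):ℤ) (((2*m:ℕ):ℤ) - 2 - ((2*m-1:ℕ):ℤ)))).card = 0 := by
    apply pairs_neg
    have : (((2*m:ℕ):ℤ) - 2 - ((2*m-1:ℕ):ℤ)) = -1 := by push_cast; omega
    rw [this]
    omega
  rw [hlast, add_zero]
  rw [Finset.range_eq_Ico, ← Finset.sum_Ico_consecutive _ (Nat.zero_le m) (by omega : m ≤ 2*m-1)]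
  congr 1
  · rw [← Finset.range_eq_Ico]
    refine Finset.sum_congr rfl fun j hj => ?_
    have hjm : j < m := Finset.mem_range.mp hj
    congr 1
    rw [min_eq_left (by push_cast; omega)]
  · rw [Finset.sum_Ico_eq_sum_range]
    have hlen : 2*m - 1 - m = m - 1 := by omega
    rw [hlen]
    rw [← Finset.sum_range_reflect (fun i => (pairs (i:ℤ)).card) (m-1)]
    refine Finset.sum_congr rfl fun i hi => ?_
    have him : i < m - 1 := Finset.mem_range.mp hi
    congr 1
    have hmr : min ((m + i : ℕ) : ℤ) (((2*m : ℕ):ℤ) - 2 - ((m + i : ℕ):ℤ))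
        = ((2*m : ℕ):ℤ) - 2 - ((m + i : ℕ):ℤ) := min_eq_right (by push_cast; omega)
    have hvv : ((2*m : ℕ):ℤ) - 2 - ((m + i : ℕ):ℤ) = ((m-1-1-i : ℕ):ℤ) := by omega
    rw [hmr, hvv]

lemma params_count (t : ℕ) (h4 : t % 12 = 4 ∨ t % 12 = 10) :
    6 * (((params (t:ℤ)).card : ℤ)) = (t:ℤ)^3 - 16*(t:ℤ)^2 + 76*(t:ℤ) - 112 := by
  rcases h4 with h4 | h4
  · obtain ⟨v, rfl⟩ : ∃ v, t = 2*(6*v+2) := ⟨t/12, by omega⟩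
    have htot := params_total (6*v+2) (by omega)
    have e1 : 6*v+2-1 = 6*v+1 := by omega
    rw [e1] at htot
    have hr1 := SG_rel (6*v+2)
    have hr2 := SG_rel (6*v+1)
    have hid1 := sum_id (6*v+2)
    have hid2 := sum_id (6*v+1)
    have hsq1 := sum_sq (6*v+2)
    have hsq2 := sum_sq (6*v+1)
    have hd21 := sum_d2 (6*v+2)
    have hd22 := sum_d2 (6*v+1)
    have hd31 := sum_d3 (6*v+2)
    have hd32 := sum_d3 (6*v+1)
    rw [show (6*v+2)/2 = 3*v+1 by omega, show (6*v+2)%2 = 0 by omega] at hd21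
    rw [show (6*v+1)/2 = 3*v by omega, show (6*v+1)%2 = 1 by omega] at hd22
    rw [show (6*v+2)/3 = 2*v by omega, show (6*v+2)%3 = 2 by omega] at hd31
    rw [show (6*v+1)/3 = 2*v by omega, show (6*v+1)%3 = 1 by omega] at hd32
    rw [htot]
    zify at hr1 hr2 hid1 hid2 hsq1 hsq2 hd21 hd22 hd31 hd32
    push_cast
    linear_combination 6*hr1 + 6*hr2 - 6*hid1 - 6*hid2 - 24*hd21 - 24*hd22
      - 24*hd31 - 24*hd32 + 2*hsq1 + 2*hsq2
  · obtain ⟨v, rfl⟩ : ∃ v, t = 2*(6*v+5) := ⟨t/12, by omega⟩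
    have htot := params_total (6*v+5) (by omega)
    have e1 : 6*v+5-1 = 6*v+4 := by omega
    rw [e1] at htot
    have hr1 := SG_rel (6*v+5)
    have hr2 := SG_rel (6*v+4)
    have hid1 := sum_id (6*v+5)
    have hid2 := sum_id (6*v+4)
    have hsq1 := sum_sq (6*v+5)
    have hsq2 := sum_sq (6*v+4)
    have hd21 := sum_d2 (6*v+5)
    have hd22 := sum_d2 (6*v+4)
    have hd31 := sum_d3 (6*v+5)
    have hd32 := sum_d3 (6*v+4)
    rw [show (6*v+5)/2 = 3*v+2 by omega, show (6*v+5)%2 = 1 by omega] at hd21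
    rw [show (6*v+4)/2 = 3*v+2 by omega, show (6*v+4)%2 = 0 by omega] at hd22
    rw [show (6*v+5)/3 = 2*v+1 by omega, show (6*v+5)%3 = 2 by omega] at hd31
    rw [show (6*v+4)/3 = 2*v+1 by omega, show (6*v+4)%3 = 1 by omega] at hd32
    rw [htot]
    zify at hr1 hr2 hid1 hid2 hsq1 hsq2 hd21 hd22 hd31 hd32
    push_cast
    linear_combination 6*hr1 + 6*hr2 - 6*hid1 - 6*hid2 - 24*hd21 - 24*hd22
      - 24*hd31 - 24*hd32 + 2*hsq1 + 2*hsq2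

def matOf (x : ℤ × ℤ × ℤ) : Matrix (Fin 3) (Fin 3) ℕ :=
  !![(x.1+x.2.1).toNat, (x.1-x.2.1-x.2.2).toNat, (x.1+x.2.2).toNat;
     (x.1-x.2.1+x.2.2).toNat, x.1.toNat, (x.1+x.2.1-x.2.2).toNat;
     (x.1-x.2.2).toNat, (x.1+x.2.1+x.2.2).toNat, (x.1-x.2.1).toNat]

set_option maxHeartbeats 4000000 in
lemma magic_set_eq (t : ℕ) :
    {M : Matrix (Fin 3) (Fin 3) ℕ | IsBoundedMagicSquare3 t M} = matOf '' ↑(params (t:ℤ)) := by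
  ext M
  simp only [Set.mem_setOf_eq, Set.mem_image, Finset.mem_coe]
  constructor
  · rintro ⟨hb, hinjM, s, hrow, hcol, hd1, hd2⟩
    have key : ∀ i j k l : Fin 3, (i, j) ≠ (k, l) → M i j ≠ M k l := by
      intro i j k l hne he
      exact hne (hinjM (he : (fun p : Fin 3 × Fin 3 => M p.1 p.2) (i, j) = _))
    have hr0 := hrow 0; have hr1 := hrow 1; have hr2 := hrow 2
    have hc0 := hcol 0; have hc1 := hcol 1; have hc2 := hcol 2
    simp only [Fin.sum_univ_three] at hr0 hr1 hr2 hc0 hc1 hc2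
    have b00 := hb 0 0; have b01 := hb 0 1; have b02 := hb 0 2
    have b10 := hb 1 0; have b11 := hb 1 1; have b12 := hb 1 2
    have b20 := hb 2 0; have b21 := hb 2 1; have b22 := hb 2 2
    have n1 := key 0 0 1 1 (by decide)
    have n2 := key 0 2 1 1 (by decide)
    have n3 := key 0 0 0 2 (by decide)
    have n4 := key 0 1 1 1 (by decide)
    have n5 := key 1 2 2 2 (by decide)
    have n6 := key 2 1 2 2 (by decide)
    have n7 := key 1 2 0 2 (by decide)
    have n8 := key 2 1 2 0 (by decide)
    refine ⟨((M 1 1 : ℤ), (M 0 0 : ℤ) - (M 1 1 : ℤ), (M 0 2 : ℤ) - (M 1 1 : ℤ)), ?_, ?_⟩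
    · simp only [params, Finset.mem_coe, Finset.mem_filter, Finset.mem_product, Finset.mem_Icc]
      simp only [DD]
      omega
    · ext i j
      fin_cases i <;> fin_cases j <;> simp [matOf] <;> omega
  · rintro ⟨⟨c, a, b⟩, hx, rfl⟩
    simp only [params, Finset.mem_coe, Finset.mem_filter, Finset.mem_product, Finset.mem_Icc] at hx
    simp only [DD] at hx
    obtain ⟨⟨⟨hc1, hc2⟩, ⟨ha1, ha2⟩, hb1, hb2⟩, ⟨da0, db0, dab, dab2, d2a, d2a2, d2b, d2b2⟩,
      ⟨p1, p2, p3, p4⟩, q1, q2, q3, q4⟩ := hx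
    refine ⟨?_, ?_, (3*c).toNat, ?_, ?_, ?_, ?_⟩
    · intro i j
      fin_cases i <;> fin_cases j <;> simp [matOf] <;> omega
    · intro p q hpq
      fin_cases p <;> fin_cases q <;> first
        | rfl
        | (exfalso; simp only [matOf] at hpq; simp at hpq; omega)
    · intro i
      fin_cases i <;> simp [Fin.sum_univ_three, matOf] <;> omega
    · intro j
      fin_cases j <;> simp [Fin.sum_univ_three, matOf] <;> omega
    · simp [matOf]; omega
    · simp [matOf]; omega

set_option maxHeartbeats 1000000 in
lemma magic_injOn (t : ℕ) : Set.InjOn matOf ↑(params (t:ℤ)) := by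
  rintro ⟨c, a, b⟩ hx ⟨c2, a2, b2⟩ hy he
  simp only [Finset.mem_coe, params, Finset.mem_filter, Finset.mem_product,
    Finset.mem_Icc] at hx hy
  simp only [DD] at hx hy
  have h11 := congrFun (congrFun he 1) 1
  have h00 := congrFun (congrFun he 0) 0
  have h02 := congrFun (congrFun he 0) 2
  simp only [matOf] at h11 h00 h02
  simp at h11 h00 h02
  simp only [Prod.mk.injEq]
  refine ⟨by omega, by omega, by omega⟩

lemma c3_eq_params (t : ℕ) : c3 t = (params (t:ℤ)).card := by
  unfold c3
  rw [magic_set_eq t, Set.ncard_image_of_injOn (magic_injOn t), Set.ncard_coe_finset]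

end MagicAux

theorem c3_formula_mod12_4_10 (t : ℕ) (ht : 0 < t) (h : t % 12 = 4 ∨ t % 12 = 10) :
    (c3 t : ℚ) = ((t : ℚ) ^ 3 - 16 * (t : ℚ) ^ 2 + 76 * (t : ℚ) - 112) / 6 := by
  have hz := params_count t h
  have hc := c3_eq_params t
  rw [hc, eq_div_iff (by norm_num : (6:ℚ) ≠ 0)]
  have hcast : (((params (t:ℤ)).card : ℚ)) * 6 = ((6 * (((params (t:ℤ)).card : ℤ)) : ℤ) : ℚ) := by
    push_cast; ring
  rw [hcast, hz]
  push_cast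
  ring
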